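/- Let L and X be as above (graph on vertex set L). Then X satisfies the triangle condition: for any n ≥ 2 and x, y, z ∈ L with d(x,y) = d(x,z) = n and d(y,z) = 1, there exists u ∈ L with d(u,y) = d(u,z) = 1 and d(u,x) = n - 1. -/

import Mathlib

open SimpleGraph

/-- The graph `X` on the vertex set `L`, with an edge between `x` and `y` iff
`x ≤ y ≤ x + 1` or `y ≤ x ≤ y + 1`, where `x + 1 = T x` for the order automorphism `T`
generating the `ℤ`-action. -/
def stepGraph {L : Type*} [Lattice L] (T : L ≃o L) : SimpleGraph L where
  Adj x y := x ≠ y ∧ ((x ≤ y ∧ y ≤ T x) ∨ (y ≤ x ∧ x ≤ T y))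
  symm := ⟨by rintro x y ⟨hne, h⟩; exact ⟨hne.symm, h.symm⟩⟩
  loopless := ⟨by rintro x ⟨hne, -⟩; exact hne rfl⟩

section Aux

variable {L : Type*} [Lattice L]

lemma sg_mul_apply (S U : L ≃o L) (a : L) : (S * U) a = S (U a) := rfl

lemma sg_one_apply (a : L) : (1 : L ≃o L) a = a := rfl

lemma sg_pow_add_apply (T : L ≃o L) (u v : ℕ) (a : L) :
    (T ^ (u + v)) a = (T ^ u) ((T ^ v) a) := by rw [pow_add]; rfl

lemma sg_pow_succ_apply (T : L ≃o L) (u : ℕ) (a : L) :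
    (T ^ (u + 1)) a = T ((T ^ u) a) := by
  rw [add_comm, sg_pow_add_apply, pow_one]

lemma sg_pow_comm_apply (T : L ≃o L) (u : ℕ) (a : L) :
    T ((T ^ u) a) = (T ^ u) (T a) := by
  have h := sg_pow_add_apply T u 1 a
  rw [pow_one] at h
  rw [← h]
  exact (sg_pow_succ_apply T u a).symm

lemma sg_pow_mono (T : L ≃o L) (u : ℕ) {a b : L} (h : a ≤ b) :
    (T ^ u) a ≤ (T ^ u) b := (T ^ u).le_iff_le.mpr h

lemma sg_le_pow (T : L ≃o L) (hinc : ∀ a : L, a < T a) (u : ℕ) (a : L) :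
    a ≤ (T ^ u) a := by
  induction u with
  | zero => simp [sg_one_apply]
  | succ u ih => rw [sg_pow_succ_apply]; exact ih.trans (hinc _).le

/-- Walk going up from `x` to `w` when `x ≤ w ≤ T^u x`. -/
lemma sg_walk_up (T : L ≃o L) (hinc : ∀ a : L, a < T a) :
    ∀ (u : ℕ) (x w : L), x ≤ w → w ≤ (T ^ u) x →
      ∃ p : (stepGraph T).Walk x w, p.length ≤ u := by
  intro u
  induction u with
  | zero =>
    intro x w h1 h2
    rw [pow_zero, sg_one_apply] at h2
    obtain rfl : x = w := le_antisymm h1 h2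
    exact ⟨Walk.nil, by simp⟩
  | succ u ih =>
    intro x w h1 h2
    set v := w ⊓ (T ^ u) x with hv
    obtain ⟨p, hp⟩ := ih x v (le_inf h1 (sg_le_pow T hinc u x)) inf_le_right
    rcases eq_or_ne v w with h | h
    · exact ⟨p.copy rfl h, by simpa using hp.trans (Nat.le_succ u)⟩
    · have hadj : (stepGraph T).Adj v w := by
        refine ⟨h, Or.inl ⟨inf_le_left, ?_⟩⟩
        rw [hv, OrderIso.map_inf, ← sg_pow_succ_apply]
        exact le_inf (hinc w).le h2
      exact ⟨p.concat hadj, by simpa [Walk.length_concat] using Nat.succ_le_succ hp⟩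

/-- Distance upper bound from the two-sided inequalities. -/
lemma sg_dist_le (T : L ≃o L) (hinc : ∀ a : L, a < T a) (u d : ℕ) {x y : L}
    (hy : y ≤ (T ^ u) x) (hx : x ≤ (T ^ d) y) :
    (stepGraph T).dist x y ≤ u + d := by
  obtain ⟨p, hp⟩ := sg_walk_up T hinc u x (x ⊔ y) le_sup_left
    (sup_le (sg_le_pow T hinc u x) hy)
  obtain ⟨q, hq⟩ := sg_walk_up T hinc d y (x ⊔ y) le_sup_right
    (sup_le hx (sg_le_pow T hinc d y))
  refine le_trans (SimpleGraph.dist_le (p.append q.reverse)) ?_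
  rw [Walk.length_append, Walk.length_reverse]
  omega

/-- Any walk gives two-sided inequalities. -/
lemma sg_walk_bounds (T : L ≃o L) {x y : L} (p : (stepGraph T).Walk x y) :
    ∃ u d : ℕ, u + d ≤ p.length ∧ y ≤ (T ^ u) x ∧ x ≤ (T ^ d) y := by
  induction p with
  | nil => exact ⟨0, 0, by simp, by simp [sg_one_apply], by simp [sg_one_apply]⟩
  | @cons a b c h q ih =>
    obtain ⟨u, d, hud, hyb, hbd⟩ := ih
    rcases h.2 with ⟨hab, hbTa⟩ | ⟨hba, haTb⟩
    · refine ⟨u + 1, d, by simp; omega, ?_, hab.trans hbd⟩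
      rw [sg_pow_succ_apply, sg_pow_comm_apply]
      exact hyb.trans (sg_pow_mono T u hbTa)
    · refine ⟨u, d + 1, by simp; omega, hyb.trans (sg_pow_mono T u hba), ?_⟩
      rw [sg_pow_succ_apply]
      exact haTb.trans (T.le_iff_le.mpr hbd)

lemma sg_connected (T : L ≃o L) (hinc : ∀ a : L, a < T a)
    (hcof : ∀ x y : L, ∃ k : ℕ, (T ^ (k : ℤ))⁻¹ x ≤ y ∧ y ≤ (T ^ (k : ℤ)) x) (x0 : L) :
    (stepGraph T).Connected := by
  haveI : Nonempty L := ⟨x0⟩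
  refine ⟨fun a b => ?_⟩
  obtain ⟨k, h1, h2⟩ := hcof a b
  rw [zpow_natCast] at h1 h2
  have h1' : a ≤ (T ^ k) b := by
    have h := sg_pow_mono T k h1
    rwa [← sg_mul_apply, mul_inv_cancel, sg_one_apply] at h
  obtain ⟨p, -⟩ := sg_walk_up T hinc k a (a ⊔ b) le_sup_left
    (sup_le (sg_le_pow T hinc k a) h2)
  obtain ⟨q, -⟩ := sg_walk_up T hinc k b (a ⊔ b) le_sup_right
    (sup_le h1' (sg_le_pow T hinc k b))
  exact ⟨p.append q.reverse⟩

lemma sg_key (T : L ≃o L) (hinc : ∀ a : L, a < T a)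
    (hcof : ∀ x y : L, ∃ k : ℕ, (T ^ (k : ℤ))⁻¹ x ≤ y ∧ y ≤ (T ^ (k : ℤ)) x)
    (n : ℕ) (hn : 2 ≤ n) (x y z : L)
    (hxy : (stepGraph T).dist x y = n) (hxz : (stepGraph T).dist x z = n)
    (hne : y ≠ z) (hyz1 : y ≤ z) (hyz2 : z ≤ T y) :
    ∃ u : L, (stepGraph T).dist u y = 1 ∧ (stepGraph T).dist u z = 1 ∧
      (stepGraph T).dist u x = n - 1 := by
  classical
  have hconn := sg_connected T hinc hcof x
  have hform : ∀ a b : L, ∃ u d : ℕ,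
      u + d ≤ (stepGraph T).dist a b ∧ b ≤ (T ^ u) a ∧ a ≤ (T ^ d) b := by
    intro a b
    obtain ⟨pw, hpw⟩ := (hconn.preconnected a b).exists_walk_length_eq_dist
    obtain ⟨u, d, h, hb, ha⟩ := sg_walk_bounds T pw
    exact ⟨u, d, hpw ▸ h, hb, ha⟩
  -- the four minimal exponents
  have hPy : ∃ u : ℕ, y ≤ (T ^ u) x := by
    obtain ⟨u, d, -, h, -⟩ := hform x y; exact ⟨u, h⟩
  have hQy : ∃ d : ℕ, x ≤ (T ^ d) y := by
    obtain ⟨u, d, -, -, h⟩ := hform x y; exact ⟨d, h⟩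
  have hPz : ∃ u : ℕ, z ≤ (T ^ u) x := by
    obtain ⟨u, d, -, h, -⟩ := hform x z; exact ⟨u, h⟩
  have hQz : ∃ d : ℕ, x ≤ (T ^ d) z := by
    obtain ⟨u, d, -, -, h⟩ := hform x z; exact ⟨d, h⟩
  set p := Nat.find hPy with hp_def
  set q := Nat.find hQy with hq_def
  set p₂ := Nat.find hPz with hp2_def
  set q₂ := Nat.find hQz with hq2_def
  have hpspec : y ≤ (T ^ p) x := Nat.find_spec hPy
  have hqspec : x ≤ (T ^ q) y := Nat.find_spec hQy
  have hp2spec : z ≤ (T ^ p₂) x := Nat.find_spec hPz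
  have hq2spec : x ≤ (T ^ q₂) z := Nat.find_spec hQz
  -- p + q = n
  have hsumy : p + q = n := by
    have hle : (stepGraph T).dist x y ≤ p + q := sg_dist_le T hinc p q hpspec hqspec
    obtain ⟨u, d, hud, hu, hd⟩ := hform x y
    have h1 : p ≤ u := Nat.find_min' hPy hu
    have h2 : q ≤ d := Nat.find_min' hQy hd
    omega
  have hsumz : p₂ + q₂ = n := by
    have hle : (stepGraph T).dist x z ≤ p₂ + q₂ := sg_dist_le T hinc p₂ q₂ hp2spec hq2spec
    obtain ⟨u, d, hud, hu, hd⟩ := hform x z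
    have h1 : p₂ ≤ u := Nat.find_min' hPz hu
    have h2 : q₂ ≤ d := Nat.find_min' hQz hd
    omega
  -- relations between the exponents
  have hq2q : q₂ ≤ q := Nat.find_min' hQz (hqspec.trans (sg_pow_mono T q hyz1))
  have hqq2 : q ≤ q₂ + 1 := by
    refine Nat.find_min' hQy ?_
    rw [sg_pow_succ_apply, sg_pow_comm_apply]
    exact hq2spec.trans (sg_pow_mono T q₂ hyz2)
  -- the common finishing step
  have hfin : ∀ w : L, (stepGraph T).Adj w y → (stepGraph T).Adj w z →
      (stepGraph T).dist x w ≤ n - 1 →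
      ∃ u : L, (stepGraph T).dist u y = 1 ∧ (stepGraph T).dist u z = 1 ∧
        (stepGraph T).dist u x = n - 1 := by
    intro w hwy hwz hle
    have h1 : (stepGraph T).dist w y = 1 := SimpleGraph.dist_eq_one_iff_adj.mpr hwy
    have h2 : (stepGraph T).dist w z = 1 := SimpleGraph.dist_eq_one_iff_adj.mpr hwz
    refine ⟨w, h1, h2, ?_⟩
    have htr : (stepGraph T).dist x y ≤
        (stepGraph T).dist x w + (stepGraph T).dist w y := hconn.dist_triangle
    rw [hxy, h1] at htr
    rw [SimpleGraph.dist_comm]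
    omega
  have hcase : q₂ = q ∨ q = q₂ + 1 := by omega
  rcases hcase with hA | hB
  · -- q₂ = q, hence p₂ = p
    have hp2p : p₂ = p := by omega
    by_cases hq0 : q = 0
    · -- q = 0, p = n : take w = y ⊓ T^(p-1) x
      obtain ⟨p', hp'⟩ : ∃ p', p = p' + 1 := ⟨p - 1, by omega⟩
      have hxley : x ≤ y := by
        have := hqspec; rw [hq0, pow_zero, sg_one_apply] at this; exact this
      set w := y ⊓ (T ^ p') x with hw
      have hTw : T w = T y ⊓ (T ^ p) x := by
        rw [hw, OrderIso.map_inf, ← sg_pow_succ_apply, ← hp']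
      have hwy : (stepGraph T).Adj w y := by
        refine ⟨?_, Or.inl ⟨inf_le_left, by rw [hTw]; exact le_inf (hinc y).le hpspec⟩⟩
        intro hcon
        have hyle : y ≤ (T ^ p') x := hcon ▸ inf_le_right
        have := Nat.find_min' hPy hyle
        omega
      have hwz : (stepGraph T).Adj w z := by
        refine ⟨?_, Or.inl ⟨inf_le_left.trans hyz1, ?_⟩⟩
        · intro hcon
          exact hne (le_antisymm hyz1 (hcon ▸ inf_le_left))
        · rw [hTw]
          exact le_inf hyz2 (by rw [← hp2p]; exact hp2spec)
      refine hfin w hwy hwz ?_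
      have hd : (stepGraph T).dist x w ≤ p' + 0 := by
        refine sg_dist_le T hinc p' 0 inf_le_right ?_
        rw [pow_zero, sg_one_apply]
        exact le_inf hxley (sg_le_pow T hinc p' x)
      omega
    · -- q ≥ 1 : take w = z ⊔ (T^(q-1)).symm x
      obtain ⟨q', hq'⟩ : ∃ q', q = q' + 1 := ⟨q - 1, by omega⟩
      set w := z ⊔ (T ^ q').symm x with hw
      have hxq'w : ∀ c : L, ((T ^ q').symm x ≤ c ↔ x ≤ (T ^ q') c) := fun c =>
        OrderIso.symm_apply_le (T ^ q')
      have hwz : (stepGraph T).Adj w z := by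
        refine ⟨?_, Or.inr ⟨le_sup_left, sup_le (hinc z).le ?_⟩⟩
        · intro hcon
          have h1 : (T ^ q').symm x ≤ z := hcon ▸ le_sup_right
          have h2 := Nat.find_min' hQz ((hxq'w z).mp h1)
          omega
        · rw [hxq'w (T z), ← sg_pow_comm_apply, ← sg_pow_succ_apply, ← hq']
          rw [← hA]
          exact hq2spec
      have hwy : (stepGraph T).Adj w y := by
        refine ⟨?_, Or.inr ⟨hyz1.trans le_sup_left, sup_le hyz2 ?_⟩⟩
        · intro hcon
          exact hne (le_antisymm hyz1 (hcon ▸ le_sup_left))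
        · rw [hxq'w (T y), ← sg_pow_comm_apply, ← sg_pow_succ_apply, ← hq']
          exact hqspec
      refine hfin w hwy hwz ?_
      have hd : (stepGraph T).dist x w ≤ p + q' := by
        refine sg_dist_le T hinc p q' (sup_le (by rw [← hp2p]; exact hp2spec) ?_) ?_
        · rw [hxq'w ((T ^ p) x), ← sg_pow_add_apply]
          exact sg_le_pow T hinc (q' + p) x
        · exact (hxq'w w).mp le_sup_right
      omega
  · -- q = q₂ + 1, hence p₂ = p + 1 : take w = (z ⊓ T^p x) ⊔ (T^q₂).symm x
    have hp2p : p₂ = p + 1 := by omega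
    set w := (z ⊓ (T ^ p) x) ⊔ (T ^ q₂).symm x with hw
    have hxq'w : ∀ c : L, ((T ^ q₂).symm x ≤ c ↔ x ≤ (T ^ q₂) c) := fun c =>
      OrderIso.symm_apply_le (T ^ q₂)
    have hwy : (stepGraph T).Adj w y := by
      refine ⟨?_, Or.inr ⟨le_trans (le_inf hyz1 hpspec) le_sup_left,
        sup_le (inf_le_left.trans hyz2) ?_⟩⟩
      · intro hcon
        have h1 : (T ^ q₂).symm x ≤ y := hcon ▸ le_sup_right
        have h2 := Nat.find_min' hQy ((hxq'w y).mp h1)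
        omega
      · rw [hxq'w (T y), ← sg_pow_comm_apply, ← sg_pow_succ_apply, ← hB]
        exact hqspec
    have hwle : w ≤ (T ^ p) x := by
      refine sup_le inf_le_right ?_
      rw [hxq'w ((T ^ p) x), ← sg_pow_add_apply]
      exact sg_le_pow T hinc (q₂ + p) x
    have hwz : (stepGraph T).Adj w z := by
      refine ⟨?_, Or.inl ⟨sup_le inf_le_left ((hxq'w z).mpr hq2spec), ?_⟩⟩
      · intro hcon
        have h1 : z ≤ (T ^ p) x := hcon ▸ hwle
        have h2 := Nat.find_min' hPz h1
        omega
      · have hz1 : z ≤ T z ⊓ (T ^ (p + 1)) x := by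
          refine le_inf (hinc z).le ?_
          rw [← hp2p]; exact hp2spec
        calc z ≤ T z ⊓ (T ^ (p + 1)) x := hz1
          _ = T (z ⊓ (T ^ p) x) := by rw [OrderIso.map_inf, sg_pow_succ_apply]
          _ ≤ T w := T.le_iff_le.mpr le_sup_left
    refine hfin w hwy hwz ?_
    have hd : (stepGraph T).dist x w ≤ p + q₂ :=
      sg_dist_le T hinc p q₂ hwle ((hxq'w w).mp le_sup_right)
    omega

end Aux

/-- Lemma 3.4. The graph `X` on `L` satisfies the triangle condition:
for any `n ≥ 2` and `x, y, z ∈ L` with `d(x,y) = d(x,z) = n` and `d(y,z) = 1`, there is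
`u ∈ L` with `d(u,y) = d(u,z) = 1` and `d(u,x) = n - 1`. -/
theorem stepGraph_triangle_condition {L : Type*} [Lattice L] (T : L ≃o L)
    (hjoin : ∀ S : Set L, S.Nonempty → BddAbove S → ∃ j, IsLUB S j)
    (hinc : ∀ x : L, x < T x)
    (hcof : ∀ x y : L, ∃ k : ℕ, (T ^ (k : ℤ))⁻¹ x ≤ y ∧ y ≤ (T ^ (k : ℤ)) x)
    (n : ℕ) (hn : 2 ≤ n) (x y z : L)
    (hxy : (stepGraph T).dist x y = n) (hxz : (stepGraph T).dist x z = n)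
    (hyz : (stepGraph T).dist y z = 1) :
    ∃ u : L, (stepGraph T).dist u y = 1 ∧ (stepGraph T).dist u z = 1 ∧
      (stepGraph T).dist u x = n - 1 := by
  have hadj : (stepGraph T).Adj y z := SimpleGraph.dist_eq_one_iff_adj.mp hyz
  obtain ⟨hne, h⟩ := hadj
  rcases h with ⟨h1, h2⟩ | ⟨h1, h2⟩
  · exact sg_key T hinc hcof n hn x y z hxy hxz hne h1 h2
  · obtain ⟨u, hu1, hu2, hu3⟩ :=
      sg_key T hinc hcof n hn x z y hxz hxy (Ne.symm hne) h1 h2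
    exact ⟨u, hu2, hu1, hu3⟩
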